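/- arXiv:1402.1193 — 3 statements merged into one kernel-verified Lean document; each statement's English description precedes it below -/
import Mathlib

section
/- Let v be a classical solution of the extension system in ℝⁿ and suppose φ = (φ_i) and ψ = (ψ_i) are two classical solutions of the linearized system: y·Δw_i + a_i ∂_y w_i = 0 on ℝⁿ × (0,∞) and −lim_{y→0⁺} y^{a_i} ∂_y w_i(x,y) = d_{s_i} ∑_{j=1}^m ∂_{u_i u_j}H(v(x,0)) w_j(x,0) for all x ∈ ℝⁿ. Assume each φ_i never vanishes on ℝⁿ × [0,∞). Then the quotients σ_i := ψ_i/φ_i satisfy div(y^{a_i} φ_i² ∇σ_i) = 0 on ℝⁿ × (0,∞) (equivalently y φ_i Δσ_i + a_i φ_i ∂_y σ_i + 2y ∇φ_i·∇σ_i = 0) and −lim_{y→0⁺} y^{a_i} φ_i(x,y)² ∂_y σ_i(x,y) = d_{s_i} ∑_{j=1}^m ∂_{u_i u_j}H(v(x,0)) φ_i(x,0) φ_j(x,0) (σ_j(x,0) − σ_i(x,0)) for all x ∈ ℝⁿ. -/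
noncomputable section

open Real MeasureTheory Filter Set

/-- Points of the upper half-space model: `(x, y)` with `x : ℝⁿ`, `y : ℝ`. -/
abbrev Pt (n : ℕ) := (Fin n → ℝ) × ℝ

/-- The `k`-th horizontal coordinate direction. -/
def eX (n : ℕ) (k : Fin n) : Pt n := (Pi.single k 1, 0)

/-- The vertical coordinate direction. -/
def eY (n : ℕ) : Pt n := (0, 1)

/-- Directional (partial) derivative of `f` at `z` in direction `d`. -/
def pd (n : ℕ) (f : Pt n → ℝ) (d : Pt n) (z : Pt n) : ℝ := fderiv ℝ f z d

/-- Laplacian in all `n + 1` variables. -/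
def lap (n : ℕ) (f : Pt n → ℝ) (z : Pt n) : ℝ :=
  (∑ k : Fin n, pd n (fun w => pd n f (eX n k) w) (eX n k) z) +
    pd n (fun w => pd n f (eY n) w) (eY n) z

/-- Squared norm of the full gradient (in all `n + 1` variables). -/
def gradSq (n : ℕ) (f : Pt n → ℝ) (z : Pt n) : ℝ :=
  (∑ k : Fin n, (pd n f (eX n k) z) ^ 2) + (pd n f (eY n) z) ^ 2

/-- Squared norm of the horizontal gradient `∇ₓ f`. -/
def gradXSq (n : ℕ) (f : Pt n → ℝ) (z : Pt n) : ℝ :=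
  ∑ k : Fin n, (pd n f (eX n k) z) ^ 2

/-- The full gradient as a vector in `Pt n`. -/
def gradVec (n : ℕ) (f : Pt n → ℝ) (z : Pt n) : Pt n :=
  (fun k => pd n f (eX n k) z, pd n f (eY n) z)

/-- Euclidean inner product on `Pt n`. -/
def dotPt (n : ℕ) (z w : Pt n) : ℝ := (∑ k : Fin n, z.1 k * w.1 k) + z.2 * w.2

/-- Divergence (in all `n + 1` variables) of a vector field on `Pt n`. -/
def diverg (n : ℕ) (V : Pt n → Pt n) (z : Pt n) : ℝ :=
  (∑ k : Fin n, fderiv ℝ (fun w => (V w).1 k) z (eX n k)) +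
    fderiv ℝ (fun w => (V w).2) z (eY n)

/-- Euclidean norm of `x : ℝⁿ`. -/
def radNorm (n : ℕ) (x : Fin n → ℝ) : ℝ := Real.sqrt (∑ k : Fin n, (x k) ^ 2)

/-- The normalizing constant `d_s = Γ(1-s) / (2^(2s-1) Γ(s))`. -/
def dCoef (s : ℝ) : ℝ := Real.Gamma (1 - s) / ((2 : ℝ) ^ (2 * s - 1) * Real.Gamma s)

/-- First partial derivative `∂_{u_i} H`. -/
def H1 (m : ℕ) (H : (Fin m → ℝ) → ℝ) (i : Fin m) (u : Fin m → ℝ) : ℝ :=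
  fderiv ℝ H u (Pi.single i 1)

/-- Second partial derivative `∂_{u_i u_j} H`. -/
def H2 (m : ℕ) (H : (Fin m → ℝ) → ℝ) (i j : Fin m) (u : Fin m → ℝ) : ℝ :=
  fderiv ℝ (fun w => fderiv ℝ H w (Pi.single i 1)) u (Pi.single j 1)

/-- Open upper half-space `ℝⁿ × (0, ∞)`. -/
def upperHalf (n : ℕ) : Set (Pt n) := {z : Pt n | 0 < z.2}

/-- Closed upper half-space `ℝⁿ × [0, ∞)`. -/
def cUpperHalf (n : ℕ) : Set (Pt n) := {z : Pt n | 0 ≤ z.2}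

/-- Half ball `B_R⁺ = {(x,y) : |x|² + y² < R², y > 0}`. -/
def BPlus (n : ℕ) (R : ℝ) : Set (Pt n) :=
  {z : Pt n | radNorm n z.1 ^ 2 + z.2 ^ 2 < R ^ 2 ∧ 0 < z.2}

/-- Ball `B_R ⊂ ℝⁿ`. -/
def ballX (n : ℕ) (R : ℝ) : Set (Fin n → ℝ) := {x | radNorm n x < R}

/-- Cylinder `C_R = B_R × (0, R)`. -/
def CylR (n : ℕ) (R : ℝ) : Set (Pt n) :=
  {z : Pt n | radNorm n z.1 < R ∧ z.2 ∈ Set.Ioo (0 : ℝ) R}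

/-- `v` is a classical solution of the extension system
`div(y^{a_i} ∇ v_i) = 0` in `ℝⁿ × (0,∞)`,
`-lim_{y→0⁺} y^{a_i} ∂_y v_i = d_{s_i} ∂_{u_i} H(v(·,0))` on `ℝⁿ`, with `a_i = 1 - 2 s_i`. -/
structure ExtSol (n m : ℕ) (s : Fin m → ℝ) (H : (Fin m → ℝ) → ℝ)
    (v : Fin m → Pt n → ℝ) : Prop where
  s_mem : ∀ i, s i ∈ Set.Ioo (0 : ℝ) 1
  H_smooth : ContDiff ℝ 2 H
  cont : ∀ i, ContinuousOn (v i) (cUpperHalf n)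
  smooth : ∀ i, ContDiffOn ℝ 2 (v i) (upperHalf n)
  interior : ∀ i, ∀ z : Pt n, 0 < z.2 →
    z.2 * lap n (v i) z + (1 - 2 * s i) * pd n (v i) (eY n) z = 0
  boundary : ∀ i, ∀ x : Fin n → ℝ,
    Tendsto (fun y : ℝ => y ^ (1 - 2 * s i) * pd n (v i) (eY n) (x, y))
      (nhdsWithin 0 (Set.Ioi 0))
      (nhds (-(dCoef (s i) * H1 m H i (fun j => v j (x, 0)))))

/-- `v` is bounded on the closed half-space. -/
def BoundedSol (n m : ℕ) (v : Fin m → Pt n → ℝ) : Prop :=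
  ∀ i, ∃ C : ℝ, ∀ z : Pt n, 0 ≤ z.2 → |v i z| ≤ C

/-- Pointwise stability of a solution `v` of the extension system. -/
def PointwiseStable (n m : ℕ) (s : Fin m → ℝ) (H : (Fin m → ℝ) → ℝ)
    (v : Fin m → Pt n → ℝ) : Prop :=
  ∃ φ : Fin m → Pt n → ℝ,
    (∀ i, ContinuousOn (φ i) (cUpperHalf n)) ∧
    (∀ i, ContDiffOn ℝ 2 (φ i) (upperHalf n)) ∧
    (∀ i, (∀ z : Pt n, 0 ≤ z.2 → 0 < φ i z) ∨ (∀ z : Pt n, 0 ≤ z.2 → φ i z < 0)) ∧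
    (∀ i, ∀ z : Pt n, 0 < z.2 →
      z.2 * lap n (φ i) z + (1 - 2 * s i) * pd n (φ i) (eY n) z = 0) ∧
    (∀ i, ∀ x : Fin n → ℝ,
      Tendsto (fun y : ℝ => y ^ (1 - 2 * s i) * pd n (φ i) (eY n) (x, y))
        (nhdsWithin 0 (Set.Ioi 0))
        (nhds (-(dCoef (s i) *
          ∑ j, H2 m H i j (fun k => v k (x, 0)) * φ j (x, 0))))) ∧
    (∀ i j : Fin m, i < j → ∀ x : Fin n → ℝ,
      0 ≤ H2 m H i j (fun k => v k (x, 0)) * φ i (x, 0) * φ j (x, 0))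

/-- The index of the last horizontal coordinate `x_n`. -/
def lastX (n : ℕ) (hn : 0 < n) : Fin n := ⟨n - 1, Nat.sub_lt hn Nat.one_pos⟩

/-- `v` is `H`-monotone: each `v_i` is strictly monotone in `x_n` and the mixed
second derivatives of `H` have the compatible signs. -/
def HMonotone (n m : ℕ) (hn : 0 < n) (H : (Fin m → ℝ) → ℝ)
    (v : Fin m → Pt n → ℝ) : Prop :=
  (∀ i, (∀ z : Pt n, 0 ≤ z.2 → 0 < pd n (v i) (eX n (lastX n hn)) z) ∨
        (∀ z : Pt n, 0 ≤ z.2 → pd n (v i) (eX n (lastX n hn)) z < 0)) ∧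
  (∀ i j : Fin m, i < j → ∀ x : Fin n → ℝ,
    0 ≤ H2 m H i j (fun k => v k (x, 0)) *
        pd n (v i) (eX n (lastX n hn)) (x, 0) *
        pd n (v j) (eX n (lastX n hn)) (x, 0))

/-- Orientability of the system along `v`. -/
def Orientable (n m : ℕ) (H : (Fin m → ℝ) → ℝ) (v : Fin m → Pt n → ℝ) : Prop :=
  ∃ θ : Fin m → (Fin n → ℝ) → ℝ,
    (∀ k, Continuous (θ k)) ∧
    (∀ k, ∃ x, θ k x ≠ 0) ∧
    (∀ k, (∀ x, 0 ≤ θ k x) ∨ (∀ x, θ k x ≤ 0)) ∧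
    (∀ i j : Fin m, i < j → ∀ x : Fin n → ℝ,
      0 ≤ H2 m H i j (fun l => v l (x, 0)) * θ i x * θ j x)

/-- The stability inequality for `v`. -/
def StabIneq (n m : ℕ) (s : Fin m → ℝ) (H : (Fin m → ℝ) → ℝ)
    (v : Fin m → Pt n → ℝ) : Prop :=
  ∀ ζ : Fin m → Pt n → ℝ, (∀ i, ContDiff ℝ 1 (ζ i)) → (∀ i, HasCompactSupport (ζ i)) →
    (∑ i, ∑ j, ∫ x : Fin n → ℝ,
        Real.sqrt (dCoef (s i) * dCoef (s j)) * H2 m H i j (fun k => v k (x, 0)) *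
          ζ i (x, 0) * ζ j (x, 0)) ≤
      ∑ i, ∫ z in upperHalf n, z.2 ^ (1 - 2 * s i) * gradSq n (ζ i) z

/-- Layer solution of the extension system in dimension `n = 1`. -/
def LayerSol (m : ℕ) (s : Fin m → ℝ) (H : (Fin m → ℝ) → ℝ)
    (v : Fin m → Pt 1 → ℝ) (α β : Fin m → ℝ) : Prop :=
  ExtSol 1 m s H v ∧ BoundedSol 1 m v ∧
  (∀ i, (∀ z : Pt 1, 0 ≤ z.2 → 0 ≤ pd 1 (v i) (eX 1 0) z) ∨
        (∀ z : Pt 1, 0 ≤ z.2 → pd 1 (v i) (eX 1 0) z ≤ 0)) ∧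
  (∀ i, ∀ y : ℝ, 0 ≤ y →
    Tendsto (fun t : ℝ => v i (fun _ => t, y)) atTop (nhds (α i))) ∧
  (∀ i, ∀ y : ℝ, 0 ≤ y →
    Tendsto (fun t : ℝ => v i (fun _ => t, y)) atBot (nhds (β i)))

/-- `w` is a classical solution of the linearized extension system at `v`. -/
def LinSol (n m : ℕ) (s : Fin m → ℝ) (H : (Fin m → ℝ) → ℝ)
    (v w : Fin m → Pt n → ℝ) : Prop :=
  (∀ i, ContinuousOn (w i) (cUpperHalf n)) ∧
  (∀ i, ContDiffOn ℝ 2 (w i) (upperHalf n)) ∧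
  (∀ i, ∀ z : Pt n, 0 < z.2 →
    z.2 * lap n (w i) z + (1 - 2 * s i) * pd n (w i) (eY n) z = 0) ∧
  (∀ i, ∀ x : Fin n → ℝ,
    Tendsto (fun y : ℝ => y ^ (1 - 2 * s i) * pd n (w i) (eY n) (x, y))
      (nhdsWithin 0 (Set.Ioi 0))
      (nhds (-(dCoef (s i) * ∑ j, H2 m H i j (fun k => v k (x, 0)) * w j (x, 0)))))


section Aux

lemma isOpen_upperHalf' (n : ℕ) : IsOpen (upperHalf n) :=
  isOpen_Ioi.preimage continuous_snd

lemma pd_congr {n : ℕ} {f g : Pt n → ℝ} {z : Pt n} (h : f =ᶠ[nhds z] g) (d : Pt n) :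
    pd n f d z = pd n g d z := by
  unfold pd; rw [h.fderiv_eq]

lemma pd_add {n : ℕ} {f g : Pt n → ℝ} {z : Pt n} (hf : DifferentiableAt ℝ f z)
    (hg : DifferentiableAt ℝ g z) (d : Pt n) :
    pd n (fun w => f w + g w) d z = pd n f d z + pd n g d z := by
  unfold pd; rw [fderiv_fun_add hf hg]; simp

lemma pd_mul {n : ℕ} {f g : Pt n → ℝ} {z : Pt n} (hf : DifferentiableAt ℝ f z)
    (hg : DifferentiableAt ℝ g z) (d : Pt n) :
    pd n (fun w => f w * g w) d z = f z * pd n g d z + g z * pd n f d z := by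
  unfold pd; rw [fderiv_fun_mul hf hg]; simp

lemma pd_diff {n : ℕ} {f : Pt n → ℝ} {z : Pt n} (hf : ContDiffAt ℝ 2 f z) (d : Pt n) :
    DifferentiableAt ℝ (fun w => pd n f d w) z := by
  have h1 : ContDiffAt ℝ 1 (fderiv ℝ f) z := hf.fderiv_right (by norm_num)
  exact (h1.differentiableAt one_ne_zero).clm_apply (differentiableAt_const d)

lemma pd2_mul {n : ℕ} {f σ : Pt n → ℝ} {O : Set (Pt n)} (hO : IsOpen O) {z : Pt n} (hz : z ∈ O)
    (hf : ∀ w ∈ O, DifferentiableAt ℝ f w) (hσ : ∀ w ∈ O, DifferentiableAt ℝ σ w)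
    (d : Pt n)
    (hf' : DifferentiableAt ℝ (fun w => pd n f d w) z)
    (hσ' : DifferentiableAt ℝ (fun w => pd n σ d w) z) :
    pd n (fun w => pd n (fun u => f u * σ u) d w) d z =
      f z * pd n (fun w => pd n σ d w) d z + σ z * pd n (fun w => pd n f d w) d z +
      2 * (pd n f d z * pd n σ d z) := by
  have h1 : (fun w => pd n (fun u => f u * σ u) d w) =ᶠ[nhds z]
      (fun w => f w * pd n σ d w + σ w * pd n f d w) := by
    filter_upwards [hO.mem_nhds hz] with w hw
    exact pd_mul (hf w hw) (hσ w hw) d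
  rw [pd_congr h1 d, pd_add (f := fun w => f w * pd n σ d w) (g := fun w => σ w * pd n f d w) ((hf z hz).mul hσ') ((hσ z hz).mul hf') d,
    pd_mul (hf z hz) hσ' d, pd_mul (hσ z hz) hf' d]
  ring

lemma pd_div {n : ℕ} {f g : Pt n → ℝ} {O : Set (Pt n)} (hO : IsOpen O) {z : Pt n} (hz : z ∈ O)
    (hf : ∀ w ∈ O, DifferentiableAt ℝ f w)
    (hne : ∀ w ∈ O, f w ≠ 0)
    (hq : DifferentiableAt ℝ (fun w => g w / f w) z) (d : Pt n) :
    pd n g d z = f z * pd n (fun w => g w / f w) d z + (g z / f z) * pd n f d z := by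
  have hev : g =ᶠ[nhds z] fun w => f w * (g w / f w) := by
    filter_upwards [hO.mem_nhds hz] with w hw
    rw [mul_div_assoc', mul_div_cancel_left₀ _ (hne w hw)]
  rw [pd_congr hev d, pd_mul (hf z hz) hq d]

end Aux

/-- the quotient `σ_i = ψ_i / φ_i` of two solutions of the linearized system
(with `φ_i` nonvanishing) satisfies `div(y^{a_i} φ_i² ∇σ_i) = 0` together with the
corresponding weighted Neumann boundary condition. -/
theorem stmt3 (n m : ℕ) (s : Fin m → ℝ) (H : (Fin m → ℝ) → ℝ)
    (v φ ψ : Fin m → Pt n → ℝ)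
    (hsol : ExtSol n m s H v)
    (hφ : LinSol n m s H v φ) (hψ : LinSol n m s H v ψ)
    (hnz : ∀ i, ∀ z : Pt n, 0 ≤ z.2 → φ i z ≠ 0) :
    (∀ i, ∀ z : Pt n, 0 < z.2 →
      z.2 * φ i z * lap n (fun w => ψ i w / φ i w) z +
        (1 - 2 * s i) * φ i z * pd n (fun w => ψ i w / φ i w) (eY n) z +
        2 * z.2 *
          ((∑ k : Fin n,
              pd n (φ i) (eX n k) z * pd n (fun w => ψ i w / φ i w) (eX n k) z) +
            pd n (φ i) (eY n) z * pd n (fun w => ψ i w / φ i w) (eY n) z) = 0) ∧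
    (∀ i, ∀ x : Fin n → ℝ,
      Tendsto (fun y : ℝ => y ^ (1 - 2 * s i) * (φ i (x, y)) ^ 2 *
          pd n (fun w => ψ i w / φ i w) (eY n) (x, y))
        (nhdsWithin 0 (Set.Ioi 0))
        (nhds (-(dCoef (s i) *
          ∑ j, H2 m H i j (fun k => v k (x, 0)) * φ i (x, 0) * φ j (x, 0) *
            (ψ j (x, 0) / φ j (x, 0) - ψ i (x, 0) / φ i (x, 0)))))) := by
  have hO := isOpen_upperHalf' n
  have hne : ∀ i, ∀ w ∈ upperHalf n, φ i w ≠ 0 := fun i w hw => hnz i w (le_of_lt hw)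
  have hσ2 : ∀ i, ContDiffOn ℝ 2 (fun w => ψ i w / φ i w) (upperHalf n) :=
    fun i => (hψ.2.1 i).div (hφ.2.1 i) (hne i)
  have hfd : ∀ i, ∀ w ∈ upperHalf n, DifferentiableAt ℝ (φ i) w := fun i w hw =>
    ((hφ.2.1 i).contDiffAt (hO.mem_nhds hw)).differentiableAt (by norm_num)
  have hσd : ∀ i, ∀ w ∈ upperHalf n, DifferentiableAt ℝ (fun u => ψ i u / φ i u) w :=
    fun i w hw => ((hσ2 i).contDiffAt (hO.mem_nhds hw)).differentiableAt (by norm_num)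
  constructor
  · -- interior equation
    intro i z hz
    have hzO : z ∈ upperHalf n := hz
    have hmem : upperHalf n ∈ nhds z := hO.mem_nhds hzO
    set σ : Pt n → ℝ := fun w => ψ i w / φ i w with hσdef
    have hf' : ∀ d : Pt n, DifferentiableAt ℝ (fun w => pd n (φ i) d w) z :=
      fun d => pd_diff ((hφ.2.1 i).contDiffAt hmem) d
    have hσ' : ∀ d : Pt n, DifferentiableAt ℝ (fun w => pd n σ d w) z :=
      fun d => pd_diff ((hσ2 i).contDiffAt hmem) d
    have hgev : ∀ w ∈ upperHalf n, (ψ i) =ᶠ[nhds w] fun u => φ i u * σ u := by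
      intro w hw
      filter_upwards [hO.mem_nhds hw] with u hu
      rw [hσdef]
      rw [mul_div_assoc', mul_div_cancel_left₀ _ (hne i u hu)]
    have key2 : ∀ d : Pt n, pd n (fun w => pd n (ψ i) d w) d z =
        φ i z * pd n (fun w => pd n σ d w) d z + σ z * pd n (fun w => pd n (φ i) d w) d z +
        2 * (pd n (φ i) d z * pd n σ d z) := by
      intro d
      have h1 : (fun w => pd n (ψ i) d w) =ᶠ[nhds z]
          (fun w => pd n (fun u => φ i u * σ u) d w) := by
        filter_upwards [hmem] with w hw
        exact pd_congr (hgev w hw) d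
      rw [pd_congr h1 d]
      exact pd2_mul hO hzO (hfd i) (hσd i) d (hf' d) (hσ' d)
    have key1 : pd n (ψ i) (eY n) z =
        φ i z * pd n σ (eY n) z + σ z * pd n (φ i) (eY n) z := by
      rw [pd_congr (hgev z hzO) (eY n), pd_mul (hfd i z hzO) (hσd i z hzO) (eY n)]
    have hlap : lap n (ψ i) z = φ i z * lap n σ z + σ z * lap n (φ i) z +
        2 * ((∑ k : Fin n, pd n (φ i) (eX n k) z * pd n σ (eX n k) z) +
          pd n (φ i) (eY n) z * pd n σ (eY n) z) := by
      unfold lap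
      rw [Finset.sum_congr rfl (fun k _ => key2 (eX n k)), key2 (eY n),
        Finset.sum_add_distrib, Finset.sum_add_distrib, ← Finset.mul_sum, ← Finset.mul_sum,
        ← Finset.mul_sum]
      ring
    have Hg := hψ.2.2.1 i z hz
    have Hf := hφ.2.2.1 i z hz
    linear_combination Hg - σ z * Hf - z.2 * hlap - (1 - 2 * s i) * key1
  · -- boundary condition
    intro i x
    have hψd : ∀ w ∈ upperHalf n, DifferentiableAt ℝ (ψ i) w := fun w hw =>
      ((hψ.2.1 i).contDiffAt (hO.mem_nhds hw)).differentiableAt (by norm_num)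
    have hEq : ∀ y ∈ Ioi (0 : ℝ),
        φ i (x, y) * (y ^ (1 - 2 * s i) * pd n (ψ i) (eY n) (x, y)) -
          ψ i (x, y) * (y ^ (1 - 2 * s i) * pd n (φ i) (eY n) (x, y)) =
        y ^ (1 - 2 * s i) * (φ i (x, y)) ^ 2 *
          pd n (fun w => ψ i w / φ i w) (eY n) (x, y) := by
      intro y hy
      have hw : ((x, y) : Pt n) ∈ upperHalf n := hy
      have h := pd_div hO hw (hfd i) (hne i) (hσd i (x, y) hw) (eY n)
      rw [h]
      have hne' : φ i (x, y) ≠ 0 := hne i _ hw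
      field_simp
      ring
    have hpath : Tendsto (fun y : ℝ => ((x, y) : Pt n)) (nhdsWithin 0 (Ioi 0))
        (nhdsWithin (x, 0) (cUpperHalf n)) := by
      rw [tendsto_nhdsWithin_iff]
      constructor
      · exact ((continuous_const.prodMk continuous_id).tendsto 0).mono_left nhdsWithin_le_nhds
      · filter_upwards [self_mem_nhdsWithin] with y hy
        exact (show (0:ℝ) ≤ y from le_of_lt (show (0:ℝ) < y from hy))
    have h00 : ((x, 0) : Pt n) ∈ cUpperHalf n := by simp [cUpperHalf]
    have hφlim : Tendsto (fun y : ℝ => φ i (x, y)) (nhdsWithin 0 (Ioi 0))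
        (nhds (φ i (x, 0))) := (hφ.1 i (x, 0) h00).tendsto.comp hpath
    have hψlim : Tendsto (fun y : ℝ => ψ i (x, y)) (nhdsWithin 0 (Ioi 0))
        (nhds (ψ i (x, 0))) := (hψ.1 i (x, 0) h00).tendsto.comp hpath
    have hcomb := (hφlim.mul (hψ.2.2.2 i x)).sub (hψlim.mul (hφ.2.2.2 i x))
    have hval : -(dCoef (s i) *
          ∑ j, H2 m H i j (fun k => v k (x, 0)) * φ i (x, 0) * φ j (x, 0) *
            (ψ j (x, 0) / φ j (x, 0) - ψ i (x, 0) / φ i (x, 0))) =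
        φ i (x, 0) * -(dCoef (s i) * ∑ j, H2 m H i j (fun k => v k (x, 0)) * ψ j (x, 0)) -
        ψ i (x, 0) * -(dCoef (s i) * ∑ j, H2 m H i j (fun k => v k (x, 0)) * φ j (x, 0)) := by
      have hterm : ∀ j : Fin m,
          H2 m H i j (fun k => v k (x, 0)) * φ i (x, 0) * φ j (x, 0) *
            (ψ j (x, 0) / φ j (x, 0) - ψ i (x, 0) / φ i (x, 0)) =
          φ i (x, 0) * (H2 m H i j (fun k => v k (x, 0)) * ψ j (x, 0)) -
          ψ i (x, 0) * (H2 m H i j (fun k => v k (x, 0)) * φ j (x, 0)) := by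
        intro j
        have h1 : φ i (x, 0) ≠ 0 := hnz i (x, 0) le_rfl
        have h2 : φ j (x, 0) ≠ 0 := hnz j (x, 0) le_rfl
        field_simp
      rw [Finset.sum_congr rfl (fun j _ => hterm j), Finset.sum_sub_distrib,
        ← Finset.mul_sum, ← Finset.mul_sum]
      ring
    rw [hval]
    exact hcomb.congr' (eventually_of_mem self_mem_nhdsWithin (fun y hy => hEq y hy))
end
end

section
/- Pohozaev-type divergence identity: let n ≥ 1, s ∈ (0,1), a = 1 − 2s, and let v : ℝⁿ × (0,∞) → ℝ be a C² function satisfying div(y^{a} ∇v) = 0 on ℝⁿ × (0,∞) (equivalently y Δv + a ∂_y v = 0), where ∇, Δ and div are taken in all n+1 variables z = (x,y). Then for every z = (x,y) with y > 0, div( y^{a} (z·∇v(z)) ∇v(z) − (1/2) y^{a} |∇v(z)|² z ) + ((n − 2s)/2) y^{a} |∇v(z)|² = 0. -/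
noncomputable section

open Real MeasureTheory Filter Set

private lemma final_alg (n : ℕ) (s y A P gy Qyy : ℝ) (u gx Qy Qy2 : Fin n → ℝ)
    (Q : Fin n → Fin n → ℝ)
    (hA : A = P * y)
    (hsymQ : ∀ k j, Q k j = Q j k)
    (hQy : ∀ k, Qy2 k = Qy k)
    (hpde : y * ((∑ k, Q k k) + Qyy) + (1 - 2*s) * gy = 0) :
    (∑ k, (A * ((∑ j, u j * gx j) + y * gy) * Q k k
        + gx k * (A * ((∑ x, u x * Q k x) + gx k + y * Qy k))
        - (1/2 * A * ((∑ j, gx j ^ 2) + gy ^ 2)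
          + u k * (1/2 * A * ((∑ x, 2 * gx x * Q k x) + 2 * gy * Qy k)))))
    + (A * ((∑ j, u j * gx j) + y * gy) * Qyy
        + gy * (A * ((∑ x, u x * Qy2 x) + y * Qyy + gy)
            + ((∑ j, u j * gx j) + y * gy) * ((1 - 2*s) * P))
        - (1/2 * A * ((∑ j, gx j ^ 2) + gy ^ 2)
          + y * (1/2 * A * ((∑ x, 2 * gx x * Qy2 x) + 2 * gy * Qyy)
            + ((∑ j, gx j ^ 2) + gy ^ 2) * (1/2 * ((1 - 2*s) * P)))))
    + ((n : ℝ) - 2 * s) / 2 * A * ((∑ j, gx j ^ 2) + gy ^ 2) = 0 := by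
  subst hA
  have h1 : ∀ k, (∑ x, 2 * gx x * Q k x) = 2 * ∑ x, gx x * Q k x := fun k => by
    rw [Finset.mul_sum]; exact Finset.sum_congr rfl fun x _ => by ring
  have h2 : (∑ x, 2 * gx x * Qy2 x) = 2 * ∑ x, gx x * Qy x := by
    rw [Finset.mul_sum]; exact Finset.sum_congr rfl fun x _ => by rw [hQy]; ring
  have h3 : (∑ x, u x * Qy2 x) = ∑ x, u x * Qy x :=
    Finset.sum_congr rfl fun x _ => by rw [hQy]
  have hswap : ∑ k, u k * ∑ x, gx x * Q k x = ∑ k, gx k * ∑ x, u x * Q k x := by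
    simp_rw [Finset.mul_sum]
    rw [Finset.sum_comm]
    exact Finset.sum_congr rfl fun k _ => Finset.sum_congr rfl fun x _ => by
      rw [hsymQ x k]; ring
  have hbig : ∀ k : Fin n, (P * y * ((∑ j, u j * gx j) + y * gy) * Q k k
        + gx k * (P * y * ((∑ x, u x * Q k x) + gx k + y * Qy k))
        - (1/2 * (P * y) * ((∑ j, gx j ^ 2) + gy ^ 2)
          + u k * (1/2 * (P * y) * ((∑ x, 2 * gx x * Q k x) + 2 * gy * Qy k))))
      = (P * y * ((∑ j, u j * gx j) + y * gy)) * Q k k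
        + (P * y) * (gx k * ∑ x, u x * Q k x) + (P * y) * gx k ^ 2
        + (P * y * y) * (gx k * Qy k)
        - (1/2 * (P * y) * ((∑ j, gx j ^ 2) + gy ^ 2))
        - (P * y) * (u k * ∑ x, gx x * Q k x) - (P * y * gy) * (u k * Qy k) := by
    intro k; rw [h1 k]; ring
  rw [Finset.sum_congr rfl fun k _ => hbig k, h2, h3]
  simp only [Finset.sum_sub_distrib, Finset.sum_add_distrib, ← Finset.mul_sum,
    Finset.sum_const, Finset.card_univ, Fintype.card_fin, nsmul_eq_mul]
  rw [hswap]
  linear_combination (P * ((∑ j, u j * gx j) + y * gy)) * hpde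

/-- pointwise Pohozaev-type divergence identity for solutions of the
degenerate equation `div(y^a ∇v) = 0`. -/
theorem stmt17 (n : ℕ) (hn : 1 ≤ n) (s : ℝ) (hs : s ∈ Set.Ioo (0 : ℝ) 1)
    (v : Pt n → ℝ) (hv : ContDiffOn ℝ 2 v (upperHalf n))
    (heq : ∀ z : Pt n, 0 < z.2 →
      z.2 * lap n v z + (1 - 2 * s) * pd n v (eY n) z = 0) :
    ∀ z : Pt n, 0 < z.2 →
      diverg n (fun w =>
          (w.2 ^ (1 - 2 * s) * dotPt n w (gradVec n v w)) • gradVec n v w -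
            ((1 / 2) * w.2 ^ (1 - 2 * s) * gradSq n v w) • w) z +
        (((n : ℝ) - 2 * s) / 2) * z.2 ^ (1 - 2 * s) * gradSq n v z = 0 := by
  intro z hz
  have hU : IsOpen (upperHalf n) := by
    have : upperHalf n = (fun w : Pt n => w.2) ⁻¹' Set.Ioi 0 := rfl
    rw [this]; exact isOpen_Ioi.preimage continuous_snd
  have hvz : ContDiffAt ℝ 2 v z := hv.contDiffAt (hU.mem_nhds hz)
  have hsym : ∀ d e : Pt n, fderiv ℝ (fderiv ℝ v) z d e = fderiv ℝ (fderiv ℝ v) z e d :=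
    fun d e => hvz.isSymmSndFDerivAt (by simp) d e
  set F := fderiv ℝ (fderiv ℝ v) z with hFdef
  have hF : HasFDerivAt (fderiv ℝ v) F z :=
    (((hvz.fderiv_right (m := 1) le_rfl)).differentiableAt one_ne_zero).hasFDerivAt
  have hP : ∀ d : Pt n, HasFDerivAt (fun w => pd n v d w)
      ((ContinuousLinearMap.apply ℝ ℝ d).comp F) z := fun d =>
    (ContinuousLinearMap.apply ℝ ℝ d).hasFDerivAt.comp z hF
  have hproj : ∀ k : Fin n, HasFDerivAt (fun w : Pt n => w.1 k)
      ((ContinuousLinearMap.proj k).comp (ContinuousLinearMap.fst ℝ (Fin n → ℝ) ℝ)) z :=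
    fun k => ((ContinuousLinearMap.proj k).comp (ContinuousLinearMap.fst ℝ (Fin n → ℝ) ℝ)).hasFDerivAt
  have hsnd : HasFDerivAt (fun w : Pt n => w.2) (ContinuousLinearMap.snd ℝ (Fin n → ℝ) ℝ) z :=
    (ContinuousLinearMap.snd ℝ (Fin n → ℝ) ℝ).hasFDerivAt
  have hpow : HasFDerivAt (fun w : Pt n => w.2 ^ (1 - 2*s))
      (((1 - 2*s) * z.2 ^ (1 - 2*s - 1)) • ContinuousLinearMap.snd ℝ (Fin n → ℝ) ℝ) z :=
    hsnd.rpow_const (Or.inl hz.ne')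
  have hD : HasFDerivAt (fun w : Pt n => (∑ k, w.1 k * pd n v (eX n k) w) + w.2 * pd n v (eY n) w)
      _ z :=
    (HasFDerivAt.fun_sum fun k (_ : k ∈ Finset.univ) => (hproj k).mul (hP (eX n k))).add
      (hsnd.mul (hP (eY n)))
  have hG : HasFDerivAt (fun w : Pt n => (∑ k, (pd n v (eX n k) w) ^ 2) + (pd n v (eY n) w) ^ 2)
      ((∑ k : Fin n, (2 * pd n v (eX n k) z) • ((ContinuousLinearMap.apply ℝ ℝ (eX n k)).comp F)) +
        (2 * pd n v (eY n) z) • ((ContinuousLinearMap.apply ℝ ℝ (eY n)).comp F)) z :=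
    by
    have hsq : ∀ d : Pt n, HasFDerivAt (fun w : Pt n => (pd n v d w) ^ 2)
        ((2 * pd n v d z) • ((ContinuousLinearMap.apply ℝ ℝ d).comp F)) z := fun d => by
      simpa [pow_two, two_mul, add_smul] using (hP d).fun_mul (hP d)
    exact (HasFDerivAt.fun_sum fun k (_ : k ∈ Finset.univ) => hsq (eX n k)).add (hsq (eY n))
  have hC : HasFDerivAt (fun w : Pt n =>
      w.2 ^ (1 - 2*s) * ((∑ k, w.1 k * pd n v (eX n k) w) + w.2 * pd n v (eY n) w)) _ z :=
    hpow.mul hD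
  have hB : HasFDerivAt (fun w : Pt n =>
      (1/2 * w.2 ^ (1 - 2*s)) * ((∑ k, (pd n v (eX n k) w) ^ 2) + (pd n v (eY n) w) ^ 2)) _ z :=
    (hpow.const_mul (1/2)).mul hG
  have hf1 : ∀ k : Fin n, HasFDerivAt (fun w : Pt n =>
      (w.2 ^ (1 - 2*s) * ((∑ j, w.1 j * pd n v (eX n j) w) + w.2 * pd n v (eY n) w)) * pd n v (eX n k) w
      - ((1/2 * w.2 ^ (1 - 2*s)) * ((∑ j, (pd n v (eX n j) w) ^ 2) + (pd n v (eY n) w) ^ 2)) * w.1 k) _ z :=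
    fun k => (hC.mul (hP (eX n k))).sub (hB.mul (hproj k))
  have hf2 : HasFDerivAt (fun w : Pt n =>
      (w.2 ^ (1 - 2*s) * ((∑ j, w.1 j * pd n v (eX n j) w) + w.2 * pd n v (eY n) w)) * pd n v (eY n) w
      - ((1/2 * w.2 ^ (1 - 2*s)) * ((∑ j, (pd n v (eX n j) w) ^ 2) + (pd n v (eY n) w) ^ 2)) * w.2) _ z :=
    (hC.mul (hP (eY n))).sub (hB.mul hsnd)
  have key1 : ∀ k : Fin n, fderiv ℝ (fun w : Pt n =>
      ((w.2 ^ (1 - 2*s) * dotPt n w (gradVec n v w)) • gradVec n v w -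
        (1 / 2 * w.2 ^ (1 - 2*s) * gradSq n v w) • w).1 k) z (eX n k) =
      z.2 ^ (1-2*s) * ((∑ j, z.1 j * pd n v (eX n j) z) + z.2 * pd n v (eY n) z) * F (eX n k) (eX n k)
      + pd n v (eX n k) z * (z.2 ^ (1-2*s) * ((∑ x, z.1 x * F (eX n k) (eX n x)) + pd n v (eX n k) z
          + z.2 * F (eX n k) (eY n)))
      - (1/2 * z.2 ^ (1-2*s) * ((∑ j, (pd n v (eX n j) z) ^ 2) + (pd n v (eY n) z) ^ 2)
        + z.1 k * (1/2 * z.2 ^ (1-2*s) * ((∑ x, 2 * pd n v (eX n x) z * F (eX n k) (eX n x))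
          + 2 * pd n v (eY n) z * F (eX n k) (eY n)))) := by
    intro k
    show fderiv ℝ (fun w : Pt n =>
      (w.2 ^ (1 - 2*s) * ((∑ j, w.1 j * pd n v (eX n j) w) + w.2 * pd n v (eY n) w)) * pd n v (eX n k) w
      - ((1/2 * w.2 ^ (1 - 2*s)) * ((∑ j, (pd n v (eX n j) w) ^ 2) + (pd n v (eY n) w) ^ 2)) * w.1 k) z (eX n k) = _
    rw [(hf1 k).fderiv]
    simp only [ContinuousLinearMap.sub_apply, ContinuousLinearMap.add_apply,
      ContinuousLinearMap.smul_apply, ContinuousLinearMap.comp_apply,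
      ContinuousLinearMap.sum_apply, ContinuousLinearMap.proj_apply,
      ContinuousLinearMap.coe_fst', ContinuousLinearMap.coe_snd',
      ContinuousLinearMap.apply_apply, smul_eq_mul, eX, eY, Pi.single_eq_same,
      mul_zero, add_zero, mul_one, Finset.sum_add_distrib, Pi.single_apply, mul_ite,
      Finset.sum_ite_eq', Finset.mem_univ, if_true]
  have key2 : fderiv ℝ (fun w : Pt n =>
      ((w.2 ^ (1 - 2*s) * dotPt n w (gradVec n v w)) • gradVec n v w -
        (1 / 2 * w.2 ^ (1 - 2*s) * gradSq n v w) • w).2) z (eY n) =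
      z.2 ^ (1-2*s) * ((∑ j, z.1 j * pd n v (eX n j) z) + z.2 * pd n v (eY n) z) * F (eY n) (eY n)
      + pd n v (eY n) z * (z.2 ^ (1-2*s) * ((∑ x, z.1 x * F (eY n) (eX n x)) + z.2 * F (eY n) (eY n)
          + pd n v (eY n) z)
        + ((∑ j, z.1 j * pd n v (eX n j) z) + z.2 * pd n v (eY n) z) * ((1-2*s) * z.2 ^ (1-2*s-1)))
      - (1/2 * z.2 ^ (1-2*s) * ((∑ j, (pd n v (eX n j) z) ^ 2) + (pd n v (eY n) z) ^ 2)
        + z.2 * (1/2 * z.2 ^ (1-2*s) * ((∑ x, 2 * pd n v (eX n x) z * F (eY n) (eX n x))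
            + 2 * pd n v (eY n) z * F (eY n) (eY n))
          + ((∑ j, (pd n v (eX n j) z) ^ 2) + (pd n v (eY n) z) ^ 2)
            * (1/2 * ((1-2*s) * z.2 ^ (1-2*s-1))))) := by
    show fderiv ℝ (fun w : Pt n =>
      (w.2 ^ (1 - 2*s) * ((∑ j, w.1 j * pd n v (eX n j) w) + w.2 * pd n v (eY n) w)) * pd n v (eY n) w
      - ((1/2 * w.2 ^ (1 - 2*s)) * ((∑ j, (pd n v (eX n j) w) ^ 2) + (pd n v (eY n) w) ^ 2)) * w.2) z (eY n) = _
    rw [hf2.fderiv]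
    simp only [ContinuousLinearMap.sub_apply, ContinuousLinearMap.add_apply,
      ContinuousLinearMap.smul_apply, ContinuousLinearMap.comp_apply,
      ContinuousLinearMap.sum_apply, ContinuousLinearMap.proj_apply,
      ContinuousLinearMap.coe_fst', ContinuousLinearMap.coe_snd',
      ContinuousLinearMap.apply_apply, smul_eq_mul, eX, eY, Pi.single_eq_same,
      mul_zero, add_zero, mul_one, Finset.sum_add_distrib, Pi.single_apply, mul_ite,
      Finset.sum_ite_eq', Finset.mem_univ, if_true, Pi.zero_apply, zero_mul, Finset.sum_const_zero]
    ring
  have hpd2 : ∀ d : Pt n, pd n (fun w => pd n v d w) d z = F d d := fun d => by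
    show fderiv ℝ (fun w => pd n v d w) z d = F d d
    rw [(hP d).fderiv]
    simp [ContinuousLinearMap.comp_apply, ContinuousLinearMap.apply_apply]
  have hpde : z.2 * ((∑ k, F (eX n k) (eX n k)) + F (eY n) (eY n))
      + (1 - 2*s) * pd n v (eY n) z = 0 := by
    have h := heq z hz
    unfold lap at h
    simp only [hpd2] at h
    exact h
  have hAP : z.2 ^ (1-2*s) = z.2 ^ (1-2*s-1) * z.2 := by
    have h := Real.rpow_add_one hz.ne' (1-2*s-1)
    rw [sub_add_cancel] at h
    exact h.symm ▸ rfl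
  unfold diverg
  simp only [key1, key2]
  simp only [gradSq]
  exact final_alg n s z.2 (z.2 ^ (1-2*s)) (z.2 ^ (1-2*s-1)) (pd n v (eY n) z)
    (F (eY n) (eY n)) z.1 (fun k => pd n v (eX n k) z)
    (fun k => F (eX n k) (eY n)) (fun k => F (eY n) (eX n k))
    (fun k j => F (eX n k) (eX n j)) hAP
    (fun k j => hsym (eX n k) (eX n j)) (fun k => hsym (eY n) (eX n k)) hpde
end
end

section
/- Let m ≥ 1, let d_1,…,d_m be positive reals, φ_1,…,φ_m nonzero reals, ζ_1,…,ζ_m reals, and let (h_{ij})_{1≤i,j≤m} be a symmetric real matrix such that h_{ij} φ_i φ_j ≥ 0 whenever i ≠ j. Then ∑_{i,j=1}^m d_i h_{ij} (φ_j/φ_i) ζ_i² ≥ ∑_{i,j=1}^m √(d_i d_j) h_{ij} ζ_i ζ_j. -/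
noncomputable section

open Real MeasureTheory Filter Set

/-- the algebraic inequality underlying the stability inequality. -/
theorem stmt18 (m : ℕ) (hm : 0 < m) (d φ ζ : Fin m → ℝ) (h : Fin m → Fin m → ℝ)
    (hd : ∀ i, 0 < d i) (hφ : ∀ i, φ i ≠ 0)
    (hsym : ∀ i j, h i j = h j i)
    (hoff : ∀ i j, i ≠ j → 0 ≤ h i j * φ i * φ j) :
    (∑ i, ∑ j, Real.sqrt (d i * d j) * h i j * ζ i * ζ j) ≤
      ∑ i, ∑ j, d i * h i j * (φ j / φ i) * ζ i ^ 2 := by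
  set A : Fin m → Fin m → ℝ := fun i j => Real.sqrt (d i * d j) * h i j * ζ i * ζ j with hA
  set B : Fin m → Fin m → ℝ := fun i j => d i * h i j * (φ j / φ i) * ζ i ^ 2 with hB
  have key : ∀ i j : Fin m, A i j + A j i ≤ B i j + B j i := by
    intro i j
    by_cases hij : i = j
    · subst hij
      simp only [hA, hB]
      rw [Real.sqrt_mul_self (hd i).le, div_self (hφ i)]
      ring_nf
      exact le_rfl
    · have hc := hoff i j hij
      have hφi := hφ i
      have hφj := hφ j
      have hs : Real.sqrt (d i * d j) = Real.sqrt (d i) * Real.sqrt (d j) :=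
        Real.sqrt_mul (hd i).le _
      have hs' : Real.sqrt (d j * d i) = Real.sqrt (d i) * Real.sqrt (d j) := by
        rw [mul_comm]; exact hs
      have hsi : Real.sqrt (d i) ^ 2 = d i := Real.sq_sqrt (hd i).le
      have hsj : Real.sqrt (d j) ^ 2 = d j := Real.sq_sqrt (hd j).le
      simp only [hA, hB, hs, hs']
      have e1 : d i * h i j * (φ j / φ i) * ζ i ^ 2
          = d i * (h i j * φ i * φ j) * (ζ i / φ i) ^ 2 := by
        field_simp
      have e2 : d j * h j i * (φ i / φ j) * ζ j ^ 2
          = d j * (h i j * φ i * φ j) * (ζ j / φ j) ^ 2 := by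
        rw [hsym j i]; field_simp
      have e3 : Real.sqrt (d i) * Real.sqrt (d j) * h i j * ζ i * ζ j
          = Real.sqrt (d i) * Real.sqrt (d j) * (h i j * φ i * φ j)
            * (ζ i / φ i) * (ζ j / φ j) := by
        field_simp
      have e4 : Real.sqrt (d i) * Real.sqrt (d j) * h j i * ζ j * ζ i
          = Real.sqrt (d i) * Real.sqrt (d j) * (h i j * φ i * φ j)
            * (ζ i / φ i) * (ζ j / φ j) := by
        rw [hsym j i]; field_simp
      rw [e1, e2, e3, e4]
      have hq : d i * (ζ i / φ i) ^ 2
            - 2 * (Real.sqrt (d i) * Real.sqrt (d j)) * (ζ i / φ i) * (ζ j / φ j)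
            + d j * (ζ j / φ j) ^ 2
          = (Real.sqrt (d i) * (ζ i / φ i) - Real.sqrt (d j) * (ζ j / φ j)) ^ 2 := by
        linear_combination (-(ζ i / φ i) ^ 2) * hsi + (-(ζ j / φ j) ^ 2) * hsj
      have hpos := mul_nonneg hc (hq ▸ sq_nonneg
        (Real.sqrt (d i) * (ζ i / φ i) - Real.sqrt (d j) * (ζ j / φ j)))
      nlinarith [hpos]
  have hsum : (∑ i, ∑ j, A i j) + (∑ i, ∑ j, A i j)
      ≤ (∑ i, ∑ j, B i j) + (∑ i, ∑ j, B i j) := by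
    have h1 : (∑ i, ∑ j, (A i j + A j i)) ≤ ∑ i, ∑ j, (B i j + B j i) :=
      Finset.sum_le_sum fun i _ => Finset.sum_le_sum fun j _ => key i j
    have h2 : (∑ i, ∑ j, (A i j + A j i)) = (∑ i, ∑ j, A i j) + (∑ i, ∑ j, A i j) := by
      rw [← Finset.sum_add_distrib]
      simp only [Finset.sum_add_distrib]
      rw [Finset.sum_comm (f := fun i j => A j i)]
    have h3 : (∑ i, ∑ j, (B i j + B j i)) = (∑ i, ∑ j, B i j) + (∑ i, ∑ j, B i j) := by
      rw [← Finset.sum_add_distrib]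
      simp only [Finset.sum_add_distrib]
      rw [Finset.sum_comm (f := fun i j => B j i)]
    rw [← h2, ← h3]; exact h1
  linarith
end
end
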